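/- Let τ ∈ FreeMagma (Option α) be a tree with |τ| ≥ 2 and let v be a tree with |v| < |τ|. Then for every tree t there exists a unique tree t' such that t ~_{τ,v} t' and t' is τ-irreducible (τ is not a subtree of t'). -/
import Mathlib


/-- The length of a tree: the number of leaves labeled by a letter of `α`. -/
def treeLen {α : Type*} : FreeMagma (Option α) → ℕ
  | FreeMagma.of none => 0
  | FreeMagma.of (some _) => 1
  | FreeMagma.mul t₁ t₂ => treeLen t₁ + treeLen t₂

/-- `s` is a subtree of `t`. -/
def IsSubtree {β : Type*} (s : FreeMagma β) : FreeMagma β → Prop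
  | FreeMagma.of a => s = FreeMagma.of a
  | FreeMagma.mul t₁ t₂ => s = FreeMagma.mul t₁ t₂ ∨ IsSubtree s t₁ ∨ IsSubtree s t₂

namespace TreeCanon

variable {α : Type*}

/-- The number of nodes of a tree. -/
def treeSize {β : Type*} : FreeMagma β → ℕ
  | FreeMagma.of _ => 1
  | FreeMagma.mul t₁ t₂ => treeSize t₁ + treeSize t₂ + 1

theorem size_le_of_subtree {β : Type*} {s t : FreeMagma β} (h : IsSubtree s t) :
    treeSize s ≤ treeSize t := by
  induction t using FreeMagma.rec with
  | of a => cases h; exact le_rfl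
  | mul t₁ t₂ ih₁ ih₂ =>
    rcases h with h | h | h
    · subst h; exact le_rfl
    · exact (ih₁ h).trans (by simp [treeSize]; omega)
    · exact (ih₂ h).trans (by simp [treeSize]; omega)

theorem len_le_of_subtree {s t : FreeMagma (Option α)} (h : IsSubtree s t) :
    treeLen s ≤ treeLen t := by
  induction t using FreeMagma.rec with
  | of a => cases h; exact le_rfl
  | mul t₁ t₂ ih₁ ih₂ =>
    rcases h with h | h | h
    · subst h; exact le_rfl
    · exact (ih₁ h).trans (by simp [treeLen])
    · exact (ih₂ h).trans (by simp [treeLen])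

/-- One rewriting step: replace one occurrence of `τ` by `v`. -/
inductive Step (τ v : FreeMagma (Option α)) :
    FreeMagma (Option α) → FreeMagma (Option α) → Prop
  | base : Step τ v τ v
  | left {a b c} : Step τ v a b → Step τ v (FreeMagma.mul a c) (FreeMagma.mul b c)
  | right {a b c} : Step τ v a b → Step τ v (FreeMagma.mul c a) (FreeMagma.mul c b)

variable {τ v : FreeMagma (Option α)}

theorem subtree_of_step {t t' : FreeMagma (Option α)} (h : Step τ v t t') : IsSubtree τ t := by
  induction h with
  | base =>
    cases τ with
    | of a => exact rfl
    | mul a b => exact Or.inl rfl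
  | left _ ih => exact Or.inr (Or.inl ih)
  | right _ ih => exact Or.inr (Or.inr ih)

theorem step_of_subtree {t : FreeMagma (Option α)} (h : IsSubtree τ t) :
    ∃ t', Step τ v t t' := by
  induction t using FreeMagma.rec with
  | of a => cases h; exact ⟨v, Step.base⟩
  | mul t₁ t₂ ih₁ ih₂ =>
    rcases h with h | h | h
    · exact h ▸ ⟨v, Step.base⟩
    · obtain ⟨t', ht'⟩ := ih₁ h; exact ⟨_, Step.left ht'⟩
    · obtain ⟨t', ht'⟩ := ih₂ h; exact ⟨_, Step.right ht'⟩

theorem step_len {t t' : FreeMagma (Option α)} (h : Step τ v t t') :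
    treeLen t' + treeLen τ = treeLen t + treeLen v := by
  induction h with
  | base => omega
  | left _ ih => show treeLen _ + _ + _ = treeLen _ + _ + _; omega
  | right _ ih => show treeLen _ + _ + _ = treeLen _ + _ + _; omega

/-- Strong local confluence of the rewriting system. -/
theorem diamond (hτ : 2 ≤ treeLen τ) {t a b : FreeMagma (Option α)}
    (h₁ : Step τ v t a) (h₂ : Step τ v t b) :
    a = b ∨ ∃ c, Step τ v a c ∧ Step τ v b c := by
  induction h₁ generalizing b with
  | base =>
    cases h₂ with
    | base => exact Or.inl rfl
    | @left a' b' c' h =>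
      have h1 := size_le_of_subtree (subtree_of_step h)
      have : treeSize (FreeMagma.mul a' c') = treeSize a' + treeSize c' + 1 := rfl
      have h2 : 1 ≤ treeSize c' := by cases c' <;> simp [treeSize] <;> omega
      omega
    | @right a' b' c' h =>
      have h1 := size_le_of_subtree (subtree_of_step h)
      have : treeSize (FreeMagma.mul c' a') = treeSize c' + treeSize a' + 1 := rfl
      have h2 : 1 ≤ treeSize c' := by cases c' <;> simp [treeSize] <;> omega
      omega
  | @left a₁ b₁ c₁ h ih =>
    cases h₂ with
    | base =>
      have h1 := size_le_of_subtree (subtree_of_step h)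
      have : treeSize (FreeMagma.mul a₁ c₁) = treeSize a₁ + treeSize c₁ + 1 := rfl
      have h2 : 1 ≤ treeSize c₁ := by cases c₁ <;> simp [treeSize] <;> omega
      omega
    | left h' =>
      rcases ih h' with rfl | ⟨c, hc₁, hc₂⟩
      · exact Or.inl rfl
      · exact Or.inr ⟨_, Step.left hc₁, Step.left hc₂⟩
    | right h' =>
      exact Or.inr ⟨_, Step.right h', Step.left h⟩
  | @right a₁ b₁ c₁ h ih =>
    cases h₂ with
    | base =>
      have h1 := size_le_of_subtree (subtree_of_step h)
      have : treeSize (FreeMagma.mul c₁ a₁) = treeSize c₁ + treeSize a₁ + 1 := rfl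
      have h2 : 1 ≤ treeSize c₁ := by cases c₁ <;> simp [treeSize] <;> omega
      omega
    | left h' =>
      exact Or.inr ⟨_, Step.left h', Step.right h⟩
    | right h' =>
      rcases ih h' with rfl | ⟨c, hc₁, hc₂⟩
      · exact Or.inl rfl
      · exact Or.inr ⟨_, Step.right hc₁, Step.right hc₂⟩

open Relation in
theorem rtg_left {a b c : FreeMagma (Option α)} (h : ReflTransGen (Step τ v) a b) :
    ReflTransGen (Step τ v) (FreeMagma.mul a c) (FreeMagma.mul b c) := by
  induction h with
  | refl => exact ReflTransGen.refl
  | tail _ h ih => exact ih.tail (Step.left h)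

open Relation in
theorem rtg_right {a b c : FreeMagma (Option α)} (h : ReflTransGen (Step τ v) a b) :
    ReflTransGen (Step τ v) (FreeMagma.mul c a) (FreeMagma.mul c b) := by
  induction h with
  | refl => exact ReflTransGen.refl
  | tail _ h ih => exact ih.tail (Step.right h)

open Relation in
theorem con_to_join (hτ : 2 ≤ treeLen τ) {a b : FreeMagma (Option α)}
    (h : (conGen (fun x y => x = τ ∧ y = v)) a b) :
    Join (ReflTransGen (Step τ v)) a b := by
  have hcr : Equivalence (Join (ReflTransGen (Step τ v))) := by
    apply equivalence_join_reflTransGen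
    intro a b c h₁ h₂
    rcases diamond hτ h₁ h₂ with rfl | ⟨d, hd₁, hd₂⟩
    · exact ⟨b, ReflGen.refl, ReflTransGen.refl⟩
    · exact ⟨d, ReflGen.single hd₁, ReflTransGen.single hd₂⟩
  induction h with
  | of x y hxy =>
    obtain ⟨rfl, rfl⟩ := hxy
    exact ⟨_, ReflTransGen.single Step.base, ReflTransGen.refl⟩
  | refl x => exact hcr.refl x
  | symm _ ih => exact hcr.symm ih
  | trans _ _ ih₁ ih₂ => exact hcr.trans ih₁ ih₂
  | mul _ _ ih₁ ih₂ =>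
    obtain ⟨c₁, h₁, h₁'⟩ := ih₁
    obtain ⟨c₂, h₂, h₂'⟩ := ih₂
    exact ⟨FreeMagma.mul c₁ c₂, (rtg_left h₁).trans (rtg_right h₂),
      (rtg_left h₁').trans (rtg_right h₂')⟩

theorem con_of_step {a b : FreeMagma (Option α)} (h : Step τ v a b) :
    (conGen (fun x y => x = τ ∧ y = v)) a b := by
  induction h with
  | base => exact ConGen.Rel.of _ _ ⟨rfl, rfl⟩
  | left _ ih => exact ConGen.Rel.mul ih (ConGen.Rel.refl _)
  | right _ ih => exact ConGen.Rel.mul (ConGen.Rel.refl _) ih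

open Relation in
theorem con_of_rtg {a b : FreeMagma (Option α)} (h : ReflTransGen (Step τ v) a b) :
    (conGen (fun x y => x = τ ∧ y = v)) a b := by
  induction h with
  | refl => exact ConGen.Rel.refl _
  | tail _ h ih => exact ih.trans (con_of_step h)

open Relation in
theorem rtg_eq_of_irred {a b : FreeMagma (Option α)} (ha : ¬ IsSubtree τ a)
    (h : ReflTransGen (Step τ v) a b) : a = b := by
  rcases h.cases_head with rfl | ⟨c, hc, _⟩
  · rfl
  · exact absurd (subtree_of_step hc) ha

open Relation in
theorem exists_nf (hτ : 2 ≤ treeLen τ) (hv : treeLen v < treeLen τ) :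
    ∀ n (t : FreeMagma (Option α)), treeLen t ≤ n →
      ∃ t', ReflTransGen (Step τ v) t t' ∧ ¬ IsSubtree τ t' := by
  intro n
  induction n with
  | zero =>
    intro t ht
    refine ⟨t, ReflTransGen.refl, fun h => ?_⟩
    have := len_le_of_subtree h
    omega
  | succ n ih =>
    intro t ht
    by_cases h : IsSubtree τ t
    · obtain ⟨t₂, ht₂⟩ := step_of_subtree (v := v) h
      have hlen := step_len ht₂
      obtain ⟨t', h₁, h₂⟩ := ih t₂ (by omega)
      exact ⟨t', ReflTransGen.head ht₂ h₁, h₂⟩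
    · exact ⟨t, ReflTransGen.refl, h⟩

end TreeCanon

open TreeCanon in
/-- For a tree `τ` with `|τ| ≥ 2` and `|v| < |τ|`, every tree `t` has a unique
`τ`-irreducible canonical representative modulo the congruence generated by `τ ~ v`. -/
theorem tree_unique_canonical_representative {α : Type*}
    (τ : FreeMagma (Option α)) (hτ : 2 ≤ treeLen τ)
    (v : FreeMagma (Option α)) (hv : treeLen v < treeLen τ) (t : FreeMagma (Option α)) :
    ∃! t' : FreeMagma (Option α),
      (conGen (fun x y => x = τ ∧ y = v)) t t' ∧ ¬ IsSubtree τ t' := by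
  obtain ⟨t', h₁, h₂⟩ := exists_nf hτ hv (treeLen t) t le_rfl
  refine ⟨t', ⟨con_of_rtg h₁, h₂⟩, ?_⟩
  rintro y ⟨hy₁, hy₂⟩
  have hcon : (conGen (fun x y => x = τ ∧ y = v)) y t' :=
    ((conGen _).symm hy₁).trans (con_of_rtg h₁)
  obtain ⟨c, hc₁, hc₂⟩ := con_to_join hτ hcon
  rw [rtg_eq_of_irred hy₂ hc₁, rtg_eq_of_irred h₂ hc₂]
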